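/- arXiv:1405.1484 — 2 statements merged into one kernel-verified Lean document; each statement's English description precedes it below -/
import Mathlib

section
/- Let n ≥ 3 be a prime and let G be the graph of Construction 1. For each i ∈ [n−1], the set R_i = {u_{i,1},…,u_{i,n}} is an independent set of the square G² of G; that is, no two distinct vertices of R_i have a common neighbor in G. -/
open SimpleGraph

/-- Entry of the Latin square `L_i`:  `L_i(j,k) ≡ j + i·(k-1) (mod n)`, with
indices and entries taken in `ZMod n` (identifying `[n] = {1,…,n}` with `ZMod n`). -/
def latinL (n : ℕ) (i j k : ZMod n) : ZMod n := j + i * (k - 1)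

/-- The vertices of the graph `G` of Construction 1:
`pv k m l` is `v_{k,m}^l ∈ P`, `qv i j` is `w_{i,j} ∈ Q` (with `i ≠ 0`, i.e. `i ∈ [n-1]`),
`rv i j` is `u_{i,j} ∈ R`, and `sv m` is `s_m ∈ S`. -/
inductive Vert (n : ℕ) : Type
  | pv (k m l : ZMod n) : Vert n
  | qv (i : {x : ZMod n // x ≠ 0}) (j : ZMod n) : Vert n
  | rv (i : {x : ZMod n // x ≠ 0}) (j : ZMod n) : Vert n
  | sv (m : ZMod n) : Vert n

/-- One-directional description of the edges of Construction 1: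
`w_{i,j}` is adjacent to `v_{k, L_i(j,k)}^l` for all `k, l`;
`u_{i,j}` is adjacent to every vertex of `T_{l, L_i(j,l)}` for every `l`;
`s_m` is adjacent to every vertex of `T_{l,m}` for every `l`. -/
def rel {n : ℕ} : Vert n → Vert n → Prop
  | .qv i j, .pv k m _ => m = latinL n i.1 j k
  | .rv i j, .pv _ m l => m = latinL n i.1 j l
  | .sv m', .pv _ m _ => m = m'
  | _, _ => False

/-- The bipartite graph `G` of Construction 1. -/
def GraphG (n : ℕ) : SimpleGraph (Vert n) where
  Adj x y := rel x y ∨ rel y x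
  symm := ⟨fun _ _ h => h.symm⟩
  loopless := ⟨by intro x h; cases x <;> simp [rel] at h⟩

/-- The square `G²` of a graph `G`: two distinct vertices are adjacent iff
their distance in `G` is at most 2 (i.e. they are adjacent or have a common neighbor). -/
def square {V : Type*} (G : SimpleGraph V) : SimpleGraph V where
  Adj x y := x ≠ y ∧ (G.Adj x y ∨ ∃ z, G.Adj x z ∧ G.Adj z y)
  symm := ⟨by
    rintro x y ⟨hxy, h | ⟨z, h1, h2⟩⟩
    · exact ⟨hxy.symm, Or.inl h.symm⟩
    · exact ⟨hxy.symm, Or.inr ⟨z, h2.symm, h1.symm⟩⟩⟩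
  loopless := ⟨fun x h => h.1 rfl⟩

/-- `P_k^l = {v_{k,1}^l, …, v_{k,n}^l}`. -/
def Pkl (n : ℕ) (k l : ZMod n) : Set (Vert n) := {x | ∃ m, x = Vert.pv k m l}

/-- `P^l = P_1^l ∪ ⋯ ∪ P_n^l`. -/
def PlSet (n : ℕ) (l : ZMod n) : Set (Vert n) := {x | ∃ k m, x = Vert.pv k m l}

/-- `P = P^1 ∪ ⋯ ∪ P^n`. -/
def Pset (n : ℕ) : Set (Vert n) := {x | ∃ k m l, x = Vert.pv k m l}

/-- `T_{l,m} = {v_{1,m}^l, …, v_{n,m}^l}`. -/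
def Tlm (n : ℕ) (l m : ZMod n) : Set (Vert n) := {x | ∃ k, x = Vert.pv k m l}

/-- `Q_i = {w_{i,1}, …, w_{i,n}}`. -/
def QiSet (n : ℕ) (i : {x : ZMod n // x ≠ 0}) : Set (Vert n) := {x | ∃ j, x = Vert.qv i j}

/-- `Q = Q_1 ∪ ⋯ ∪ Q_{n-1}`. -/
def Qset (n : ℕ) : Set (Vert n) := {x | ∃ i j, x = Vert.qv i j}

/-- `R_i = {u_{i,1}, …, u_{i,n}}`. -/
def RiSet (n : ℕ) (i : {x : ZMod n // x ≠ 0}) : Set (Vert n) := {x | ∃ j, x = Vert.rv i j}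

/-- `R = R_1 ∪ ⋯ ∪ R_{n-1}`. -/
def Rset (n : ℕ) : Set (Vert n) := {x | ∃ i j, x = Vert.rv i j}

/-- `S = {s_1, …, s_n}`. -/
def Sset (n : ℕ) : Set (Vert n) := {x | ∃ m, x = Vert.sv m}

/-- `G_l`, the subgraph of `G` induced by `P^l ∪ Q` (kept on the same vertex type:
all edges of `G` with both endpoints in `P^l ∪ Q`). -/
def Gl (n : ℕ) (l : ZMod n) : SimpleGraph (Vert n) where
  Adj x y := (GraphG n).Adj x y ∧ x ∈ PlSet n l ∪ Qset n ∧ y ∈ PlSet n l ∪ Qset n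
  symm := ⟨fun _ _ ⟨h, hx, hy⟩ => ⟨h.symm, hy, hx⟩⟩
  loopless := ⟨fun x h => (GraphG n).loopless.irrefl x h.1⟩

/-- `G` is `k`-choosable: for every list assignment with all lists of size at least `k`
there is a proper coloring choosing each color from the corresponding list. -/
def Choosable {V : Type*} (G : SimpleGraph V) (k : ℕ) : Prop :=
  ∀ L : V → Finset ℕ, (∀ v, k ≤ (L v).card) →
    ∃ φ : V → ℕ, (∀ v, φ v ∈ L v) ∧ ∀ ⦃v w⦄, G.Adj v w → φ v ≠ φ w

/-- The list chromatic number `χ_ℓ(G)`: the least `k` such that `G` is `k`-choosable. -/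
noncomputable def listChromaticNumber {V : Type*} (G : SimpleGraph V) : ℕ :=
  sInf {k | Choosable G k}


/-- each `R_i` is an independent set of `G²`: distinct vertices of `R_i`
are non-adjacent in `G²`, i.e. they have no common neighbor in `G`. -/
theorem stmt_8 (n : ℕ) (hn : n.Prime) (hn3 : 3 ≤ n) (i : {x : ZMod n // x ≠ 0}) :
    ∀ x ∈ RiSet n i, ∀ y ∈ RiSet n i, x ≠ y →
      ¬ (square (GraphG n)).Adj x y ∧
      ¬ ∃ z, (GraphG n).Adj x z ∧ (GraphG n).Adj y z := by
  rintro x ⟨j, rfl⟩ y ⟨j', rfl⟩ hxy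
  have key : ¬ ∃ z, (GraphG n).Adj (Vert.rv i j) z ∧ (GraphG n).Adj (Vert.rv i j') z := by
    rintro ⟨z, hz1, hz2⟩
    cases z with
    | pv k m l =>
        simp only [GraphG, rel, latinL, or_false] at hz1 hz2
        exact hxy (by rw [hz1] at hz2; simp at hz2; rw [hz2])
    | qv a b => exact hz1.elim id id
    | rv a b => exact hz1.elim id id
    | sv m => exact hz1.elim id id
  refine ⟨?_, key⟩
  rintro ⟨-, h | h⟩
  · exact h.elim id id
  · obtain ⟨z, h1, h2⟩ := h
    exact key ⟨z, h1, h2.symm⟩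
end

section
/- Let n ≥ 3 be a prime and let G be the graph of Construction 1. Then the subgraph of G² induced by P = P^1 ∪ ⋯ ∪ P^n is isomorphic to the complete multipartite graph K_{n*n²} whose n² partite sets are the sets P_k^l for k, l ∈ [n]; equivalently, two distinct vertices v_{k,j}^l and v_{k',j'}^{l'} of P are adjacent in G² if and only if (k,l) ≠ (k',l'). -/
open SimpleGraph

noncomputable def finEq (n : ℕ) [NeZero n] : ZMod n ≃ Fin n :=
  Fintype.equivFinOfCardEq (ZMod.card n)

noncomputable def pIdx (n : ℕ) [NeZero n] : Vert n → ((_ : Fin n × Fin n) × Fin n)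
  | .pv k m l => ⟨(finEq n k, finEq n l), finEq n m⟩
  | _ => ⟨(finEq n 0, finEq n 0), finEq n 0⟩

noncomputable def pEquiv (n : ℕ) [NeZero n] : ↥(Pset n) ≃ ((_ : Fin n × Fin n) × Fin n) where
  toFun x := pIdx n x.1
  invFun y := ⟨.pv ((finEq n).symm y.1.1) ((finEq n).symm y.2) ((finEq n).symm y.1.2),
    _, _, _, rfl⟩
  left_inv := by rintro ⟨_, k, m, l, rfl⟩; simp [pIdx]
  right_inv := by rintro ⟨⟨a, b⟩, c⟩; simp [pIdx]

lemma key_adj (n : ℕ) [Fact (Nat.Prime n)] (k j l k' j' l' : ZMod n) :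
    (square (GraphG n)).Adj (Vert.pv k j l) (Vert.pv k' j' l') ↔ (k, l) ≠ (k', l') := by
  constructor
  · rintro ⟨hne, h | ⟨z, h1, h2⟩⟩
    · simp [GraphG, rel] at h
    · rintro heq
      obtain ⟨rfl, rfl⟩ : k = k' ∧ l = l' := by
        simpa [Prod.ext_iff] using heq
      have hj : j ≠ j' := fun h => hne (by rw [h])
      cases z with
      | pv a b c => simp [GraphG, rel] at h1
      | qv i j0 =>
        have e1 : j = latinL n i.1 j0 k := by simpa [GraphG, rel] using h1
        have e2 : j' = latinL n i.1 j0 k := by simpa [GraphG, rel] using h2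
        exact hj (e1.trans e2.symm)
      | rv i j0 =>
        have e1 : j = latinL n i.1 j0 l := by simpa [GraphG, rel] using h1
        have e2 : j' = latinL n i.1 j0 l := by simpa [GraphG, rel] using h2
        exact hj (e1.trans e2.symm)
      | sv m =>
        have e1 : j = m := by simpa [GraphG, rel] using h1
        have e2 : j' = m := by simpa [GraphG, rel] using h2
        exact hj (e1.trans e2.symm)
  · intro hne
    have hvne : Vert.pv k j l ≠ Vert.pv k' j' l' := by
      intro h
      injection h with h1 h2 h3
      exact hne (by rw [h1, h3])
    refine ⟨hvne, Or.inr ?_⟩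
    by_cases hj : j = j'
    · exact ⟨Vert.sv j, Or.inr rfl, Or.inl hj.symm⟩
    · by_cases hk : k = k'
      · have hl : l ≠ l' := fun h => hne (by rw [hk, h])
        have hls : l - l' ≠ 0 := sub_ne_zero.mpr hl
        set i : ZMod n := (j - j') * (l - l')⁻¹ with hi
        have hine : i ≠ 0 := mul_ne_zero (sub_ne_zero.mpr hj) (inv_ne_zero hls)
        have hcanc : i * (l - l') = j - j' := by
          rw [hi, mul_assoc, inv_mul_cancel₀ hls, mul_one]
        refine ⟨Vert.rv ⟨i, hine⟩ (j - i * (l - 1)), Or.inr ?_, Or.inl ?_⟩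
        · show j = latinL n i (j - i * (l - 1)) l
          simp [latinL]
        · show j' = latinL n i (j - i * (l - 1)) l'
          unfold latinL
          linear_combination hcanc
      · have hks : k - k' ≠ 0 := sub_ne_zero.mpr hk
        set i : ZMod n := (j - j') * (k - k')⁻¹ with hi
        have hine : i ≠ 0 := mul_ne_zero (sub_ne_zero.mpr hj) (inv_ne_zero hks)
        have hcanc : i * (k - k') = j - j' := by
          rw [hi, mul_assoc, inv_mul_cancel₀ hks, mul_one]
        refine ⟨Vert.qv ⟨i, hine⟩ (j - i * (k - 1)), Or.inr ?_, Or.inl ?_⟩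
        · show j = latinL n i (j - i * (k - 1)) k
          simp [latinL]
        · show j' = latinL n i (j - i * (k - 1)) k'
          unfold latinL
          linear_combination hcanc

/-- the subgraph of `G²` induced by `P` is isomorphic to the complete
multipartite graph `K_{n*n²}` with the `n²` partite sets `P_k^l`; equivalently, distinct
vertices `v_{k,j}^l` and `v_{k',j'}^{l'}` are adjacent in `G²` iff `(k,l) ≠ (k',l')`. -/
theorem stmt_13 (n : ℕ) (hn : n.Prime) (hn3 : 3 ≤ n) :
    Nonempty ((square (GraphG n)).induce (Pset n) ≃g
      completeMultipartiteGraph (fun _ : Fin n × Fin n => Fin n)) ∧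
    ∀ k j l k' j' l' : ZMod n,
      ((square (GraphG n)).Adj (Vert.pv k j l) (Vert.pv k' j' l') ↔ (k, l) ≠ (k', l')) := by
  haveI : Fact (Nat.Prime n) := ⟨hn⟩
  haveI : NeZero n := ⟨hn.ne_zero⟩
  refine ⟨⟨⟨pEquiv n, ?_⟩⟩, fun k j l k' j' l' => key_adj n k j l k' j' l'⟩
  rintro ⟨_, k, m, l, rfl⟩ ⟨_, k', m', l', rfl⟩
  show (¬((finEq n k, finEq n l) = (finEq n k', finEq n l'))) ↔ _
  rw [show ((square (GraphG n)).induce (Pset n)).Adj ⟨_, k, m, l, rfl⟩ ⟨_, k', m', l', rfl⟩ ↔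
      (square (GraphG n)).Adj (Vert.pv k m l) (Vert.pv k' m' l') from Iff.rfl]
  rw [key_adj]
  simp [Prod.ext_iff]
end
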